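/- Let α ∈ (0,1), γ > 0, k > 0, and set θ̲ = -(1 + k^{1/(1-α)})^{1-α}. Define F(y) = U(y-γ) + θ̲·y^α for y ≥ 0, where U(x) = x^α for x ≥ 0 and U(x) = -k|x|^α for x < 0. Then F(0) = F(γ(1 + k^{-1/(1-α)})) = -k·γ^α, and F(y) < -k·γ^α for all y ∈ [0,∞) \ {0, γ(1 + k^{-1/(1-α)})}. -/

import Mathlib

open Real NNReal

private lemma amgm_strict {w₁ w₂ p₁ p₂ : ℝ} (hw₁ : 0 < w₁) (hw₂ : 0 < w₂)
    (hw : w₁ + w₂ = 1) (hp₁ : 0 < p₁) (hp₂ : 0 < p₂) (hne : p₁ ≠ p₂) :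
    p₁ ^ w₁ * p₂ ^ w₂ < w₁ * p₁ + w₂ * p₂ := by
  have hlog := strictConcaveOn_log_Ioi.2 (Set.mem_Ioi.2 hp₁) (Set.mem_Ioi.2 hp₂) hne hw₁ hw₂ hw
  simp only [smul_eq_mul] at hlog
  have hpos : 0 < w₁ * p₁ + w₂ * p₂ := by positivity
  rw [Real.rpow_def_of_pos hp₁, Real.rpow_def_of_pos hp₂, ← Real.exp_add, ← Real.exp_log hpos]
  exact Real.exp_lt_exp.2 (by nlinarith [hlog])

private lemma holder_strict {w₁ w₂ u v a b : ℝ} (hw₁ : 0 < w₁) (hw₂ : 0 < w₂)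
    (hw : w₁ + w₂ = 1) (hu : 0 < u) (hv : 0 < v) (ha : 0 < a) (hb : 0 < b)
    (hne : u * b ≠ v * a) :
    u ^ w₁ * v ^ w₂ + a ^ w₁ * b ^ w₂ < (u + a) ^ w₁ * (v + b) ^ w₂ := by
  have hS : 0 < u + a := by linarith
  have hT : 0 < v + b := by linarith
  have hdiv : ∀ x y : ℝ, 0 ≤ x → 0 ≤ y →
      (x / (u + a)) ^ w₁ * (y / (v + b)) ^ w₂ = x ^ w₁ * y ^ w₂ / ((u + a) ^ w₁ * (v + b) ^ w₂) := by
    intro x y hx hy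
    rw [Real.div_rpow hx hS.le, Real.div_rpow hy hT.le, div_mul_div_comm]
  have hne' : u / (u + a) ≠ v / (v + b) := by
    rw [ne_eq, div_eq_div_iff hS.ne' hT.ne']
    intro h
    apply hne
    nlinarith
  have h1 : (u / (u + a)) ^ w₁ * (v / (v + b)) ^ w₂ < w₁ * (u / (u + a)) + w₂ * (v / (v + b)) :=
    amgm_strict hw₁ hw₂ hw (by positivity) (by positivity) hne'
  have h2 : (a / (u + a)) ^ w₁ * (b / (v + b)) ^ w₂ ≤ w₁ * (a / (u + a)) + w₂ * (b / (v + b)) :=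
    Real.geom_mean_le_arith_mean2_weighted hw₁.le hw₂.le (by positivity) (by positivity) hw
  rw [hdiv u v hu.le hv.le] at h1
  rw [hdiv a b ha.le hb.le] at h2
  have hsum : w₁ * (u / (u + a)) + w₂ * (v / (v + b)) +
      (w₁ * (a / (u + a)) + w₂ * (b / (v + b))) = 1 := by
    field_simp
    linear_combination ((u + a) * (v + b)) * hw
  have hST : 0 < (u + a) ^ w₁ * (v + b) ^ w₂ := by positivity
  have := add_lt_add_of_lt_of_le h1 h2
  rw [← add_div] at this
  calc u ^ w₁ * v ^ w₂ + a ^ w₁ * b ^ w₂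
      = (u ^ w₁ * v ^ w₂ + a ^ w₁ * b ^ w₂) / ((u + a) ^ w₁ * (v + b) ^ w₂)
        * ((u + a) ^ w₁ * (v + b) ^ w₂) := by field_simp
    _ < 1 * ((u + a) ^ w₁ * (v + b) ^ w₂) := by
        apply mul_lt_mul_of_pos_right _ hST
        calc (u ^ w₁ * v ^ w₂ + a ^ w₁ * b ^ w₂) / ((u + a) ^ w₁ * (v + b) ^ w₂)
            < w₁ * (u / (u + a)) + w₂ * (v / (v + b)) +
              (w₁ * (a / (u + a)) + w₂ * (b / (v + b))) := this
          _ = 1 := hsum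
    _ = (u + a) ^ w₁ * (v + b) ^ w₂ := one_mul _

private lemma rpow_subadd {x y p : ℝ} (hx : 0 ≤ x) (hy : 0 ≤ y) (hp : 0 ≤ p) (hp1 : p ≤ 1) :
    (x + y) ^ p ≤ x ^ p + y ^ p := by
  have h := NNReal.rpow_add_le_add_rpow x.toNNReal y.toNNReal hp hp1
  have hc : ((x.toNNReal + y.toNNReal : ℝ≥0) : ℝ) = x + y := by
    simp [Real.coe_toNNReal x hx, Real.coe_toNNReal y hy]
  calc (x + y) ^ p = (((x.toNNReal + y.toNNReal : ℝ≥0) : ℝ)) ^ p := by rw [hc]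
    _ = (((x.toNNReal + y.toNNReal : ℝ≥0) ^ p : ℝ≥0) : ℝ) := by
        rw [NNReal.coe_rpow]
    _ ≤ (((x.toNNReal ^ p + y.toNNReal ^ p : ℝ≥0) : ℝ)) := by exact_mod_cast h
    _ = x ^ p + y ^ p := by
        push_cast
        rw [← NNReal.coe_rpow, ← NNReal.coe_rpow] <;>
        simp [Real.coe_toNNReal x hx, Real.coe_toNNReal y hy]

theorem stmt5 (α γ k : ℝ) (hα : α ∈ Set.Ioo (0:ℝ) 1) (hγ : 0 < γ) (hk : 0 < k)
    (θ : ℝ) (hθ : θ = -(1 + k ^ (1 / (1 - α))) ^ (1 - α))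
    (U F : ℝ → ℝ)
    (hU : ∀ x : ℝ, U x = if 0 ≤ x then x ^ α else -k * |x| ^ α)
    (hF : ∀ y : ℝ, F y = U (y - γ) + θ * y ^ α)
    (y₀ : ℝ) (hy₀ : y₀ = γ * (1 + k ^ (-(1 / (1 - α))))) :
    F 0 = -k * γ ^ α ∧ F y₀ = -k * γ ^ α ∧
    (∀ y : ℝ, 0 ≤ y → y ≠ 0 → y ≠ y₀ → F y < -k * γ ^ α) := by
  obtain ⟨hα0, hα1⟩ := hα
  set β := 1 - α with hβdef
  have hβ : 0 < β := by simp [hβdef]; linarith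
  have hαβ : α + β = 1 := by simp [hβdef]
  set c := k ^ (1 / β) with hcdef
  have hc : 0 < c := Real.rpow_pos_of_pos hk _
  have hck : c ^ β = k := by
    rw [hcdef, ← Real.rpow_mul hk.le, one_div_mul_cancel hβ.ne', Real.rpow_one]
  have hcinv : k ^ (-(1 / β)) = c⁻¹ := by
    rw [Real.rpow_neg hk.le, hcdef]
  have hθ' : θ = -(1 + c) ^ β := hθ
  have hy₀' : y₀ = γ * (1 + c⁻¹) := by rw [hy₀, hcinv]
  have hklt : k < (1 + c) ^ β := by
    rw [← hck]
    exact Real.rpow_lt_rpow hc.le (by linarith) hβ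
  have hγα : 0 < γ ^ α := Real.rpow_pos_of_pos hγ _
  -- F 0
  have hF0 : F 0 = -k * γ ^ α := by
    rw [hF, hU]
    have : ¬ (0 : ℝ) ≤ 0 - γ := by linarith
    rw [if_neg this, Real.zero_rpow hα0.ne']
    rw [show |0 - γ| = γ by rw [abs_of_nonpos (by linarith)]; ring]
    ring
  refine ⟨hF0, ?_, ?_⟩
  -- F y₀
  · have hy₀γ : y₀ - γ = γ / c := by rw [hy₀']; field_simp; ring
    have hγc : 0 < γ / c := by positivity
    rw [hF, hU, hy₀γ, if_pos hγc.le, hθ', hy₀']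
    have e1 : (γ / c) ^ α = γ ^ α / c ^ α := Real.div_rpow hγ.le hc.le α
    have e2 : (γ * (1 + c⁻¹)) ^ α = γ ^ α * ((1 + c) / c) ^ α := by
      rw [Real.mul_rpow hγ.le (by positivity)]
      congr 2
      field_simp
      ring
    have e3 : ((1 + c) / c) ^ α = (1 + c) ^ α / c ^ α := Real.div_rpow (by positivity) hc.le α
    have h1 : c ^ α * c ^ β = c := by
      rw [← Real.rpow_add hc, hαβ, Real.rpow_one]
    have h2 : (1 + c) ^ α * (1 + c) ^ β = 1 + c := by
      rw [← Real.rpow_add (by positivity), hαβ, Real.rpow_one]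
    have hcα : (0:ℝ) < c ^ α := Real.rpow_pos_of_pos hc _
    rw [e1, e2, e3, ← hck]
    field_simp
    nlinarith [h1, h2, hγα, hcα]
  -- strict inequality
  · intro y hy hy0 hyy₀
    have hypos : 0 < y := lt_of_le_of_ne hy (Ne.symm hy0)
    rcases le_or_gt y γ with hyγ | hyγ
    · -- 0 < y ≤ γ
      have hUy : U (y - γ) = -k * (γ - y) ^ α := by
        rw [hU]
        split_ifs with h
        · have : y = γ := le_antisymm hyγ (by linarith)
          subst this
          simp [Real.zero_rpow hα0.ne']
        · rw [abs_of_neg (by linarith)]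
          ring_nf
      rw [hF, hUy, hθ']
      have hsub : γ ^ α ≤ (γ - y) ^ α + y ^ α := by
        have := rpow_subadd (x := γ - y) (y := y) (by linarith) hy hα0.le hα1.le
        calc γ ^ α = ((γ - y) + y) ^ α := by ring_nf
          _ ≤ (γ - y) ^ α + y ^ α := this
      have hyα : 0 < y ^ α := Real.rpow_pos_of_pos hypos _
      nlinarith [hklt, hsub, hyα]
    · -- y > γ
      have ht : 0 < y - γ := by linarith
      have hne : (y - γ) * c ≠ 1 * γ := by
        intro h
        apply hyy₀
        rw [hy₀']
        linear_combination c⁻¹ * h + (γ - y) * (mul_inv_cancel₀ hc.ne')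
      have key := holder_strict hα0 hβ hαβ ht one_pos hγ hc hne
      rw [Real.one_rpow, hck, mul_one, show y - γ + γ = y by ring] at key
      rw [hF, hU, if_pos ht.le, hθ']
      linarith [key]
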